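/- Let G be a non-abelian finite simple group. Then there exist two distinct maximal subgroups H and K of G such that T := H ∩ K is non-trivial, T is not a normal subgroup of H, T is not a normal subgroup of K, and the cardinality of T equals the maximal cardinality of an intersection M₁ ∩ M₂ over all pairs of distinct maximal subgroups M₁, M₂ of G. -/

import Mathlib

open Subgroup

variable {G : Type} [Group G]

/-- The conjugate `g M g⁻¹` of a subgroup. -/
private def cj (g : G) (M : Subgroup G) : Subgroup G :=
  M.map ((MulAut.conj g : G ≃* G) : G →* G)

private lemma mem_cj {g x : G} {M : Subgroup G} : x ∈ cj g M ↔ g⁻¹ * x * g ∈ M := by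
  constructor
  · rintro ⟨m, hm, rfl⟩
    simpa [MulAut.conj_apply, mul_assoc] using hm
  · intro h
    exact ⟨g⁻¹ * x * g, h, by simp [MulAut.conj_apply, mul_assoc]⟩

private lemma cj_cj (a b : G) (M : Subgroup G) : cj a (cj b M) = cj (a * b) M := by
  ext x
  simp [mem_cj, mul_assoc, mul_inv_rev]

private lemma cj_one (M : Subgroup G) : cj (1 : G) M = M := by
  ext x; simp [mem_cj]

private lemma cj_of_mem_normalizer {g : G} {M : Subgroup G} (hg : g ∈ normalizer (M : Set G)) :
    cj g M = M := by
  ext x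
  rw [mem_cj]
  rw [Subgroup.mem_normalizer_iff''] at hg
  exact (hg x).symm

private lemma cj_eq_self_of_mem {m : G} {M : Subgroup G} (hm : m ∈ M) : cj m M = M :=
  cj_of_mem_normalizer (Subgroup.le_normalizer hm)

private lemma cj_mono {g : G} {A B : Subgroup G} (h : A ≤ B) : cj g A ≤ cj g B := by
  intro x hx
  rw [mem_cj] at hx ⊢
  exact h hx

private lemma card_cj (g : G) (M : Subgroup G) : Nat.card (cj g M) = Nat.card M :=
  (Nat.card_congr (M.equivMapOfInjective _ (MulAut.conj g).injective).toEquiv).symm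

private lemma coatom_cj {g : G} {M : Subgroup G} (hM : IsCoatom M) : IsCoatom (cj g M) := by
  have : cj g M = M.comap ((((MulAut.conj g : G ≃* G)).symm : G ≃* G) : G →* G) :=
    Subgroup.map_equiv_eq_comap_symm _ _
  rw [this]
  exact (Subgroup.isCoatom_comap ((MulAut.conj g : G ≃* G).symm)).mpr hM

private lemma not_cyclic (hna : ¬ ∀ a b : G, a * b = b * a) (x : G) :
    Subgroup.zpowers x ≠ ⊤ := by
  intro hx
  apply hna
  intro a b
  have ha : a ∈ Subgroup.zpowers x := hx.symm ▸ Subgroup.mem_top a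
  have hb : b ∈ Subgroup.zpowers x := hx.symm ▸ Subgroup.mem_top b
  obtain ⟨m, rfl⟩ := Subgroup.mem_zpowers_iff.mp ha
  obtain ⟨n, rfl⟩ := Subgroup.mem_zpowers_iff.mp hb
  rw [← zpow_add, ← zpow_add, add_comm]

private lemma coatom_ne_bot [Nontrivial G] (hna : ¬ ∀ a b : G, a * b = b * a)
    {M : Subgroup G} (hM : IsCoatom M) : M ≠ ⊥ := by
  rintro rfl
  obtain ⟨x, hx⟩ := exists_ne (1 : G)
  have h1 : (⊥ : Subgroup G) < Subgroup.zpowers x :=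
    (Subgroup.zpowers_ne_bot.mpr hx).bot_lt
  exact not_cyclic hna x (hM.2 _ h1)

private lemma coatom_self_normalizer [IsSimpleGroup G] (hna : ¬ ∀ a b : G, a * b = b * a)
    {M : Subgroup G} (hM : IsCoatom M) : normalizer (M : Set G) = M := by
  rcases (Subgroup.le_normalizer (H := M)).lt_or_eq with hlt | heq
  · exfalso
    have htop : normalizer (M : Set G) = ⊤ := hM.2 _ hlt
    rcases (Subgroup.normalizer_eq_top_iff.mp htop).eq_bot_or_eq_top with h | h
    · exact coatom_ne_bot hna hM h
    · exact hM.1 h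
  · exact heq.symm

private lemma eq_of_le_of_card_le' [Finite G] {A B : Subgroup G} (h : A ≤ B)
    (hc : Nat.card B ≤ Nat.card A) : A = B := by
  apply SetLike.coe_injective
  apply Set.eq_of_subset_of_ncard_le h
  rwa [← Nat.card_coe_set_eq, ← Nat.card_coe_set_eq]

/-- Counting the union of the conjugates of a subgroup whose distinct conjugates
intersect trivially. -/
private lemma card_conj_union [Finite G] (M : Subgroup G) (hMbot : M ≠ ⊥)
    (htriv : ∀ g : G, g ∉ M → M ⊓ cj g M = ⊥) :
    ∃ D : Finset G, (∀ x : G, x ∈ D ↔ x ≠ 1 ∧ ∃ g : G, x ∈ cj g M) ∧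
      D.card + M.index = Nat.card G := by
  classical
  letI := Fintype.ofFinite G
  have key : ∀ a b : G, (a : G ⧸ M) = (b : G ⧸ M) → cj a M = cj b M := by
    intro a b hab
    have h : a⁻¹ * b ∈ M := QuotientGroup.eq.mp hab
    calc cj a M = cj a (cj (a⁻¹ * b) M) := by rw [cj_eq_self_of_mem h]
      _ = cj (a * (a⁻¹ * b)) M := cj_cj _ _ _
      _ = cj b M := by rw [mul_inv_cancel_left]
  -- distinct conjugates intersect trivially (general form)
  have htriv' : ∀ a b : G, ((a : G ⧸ M) ≠ (b : G ⧸ M)) →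
      ∀ y : G, y ∈ cj a M → y ∈ cj b M → y = 1 := by
    intro a b hab y hya hyb
    have hnm : a⁻¹ * b ∉ M := fun h => hab (QuotientGroup.eq.mpr h)
    have h1 : a⁻¹ * y * a ∈ M := mem_cj.mp hya
    have h2 : a⁻¹ * y * a ∈ cj (a⁻¹ * b) M := by
      rw [mem_cj]
      have : (a⁻¹ * b)⁻¹ * (a⁻¹ * y * a) * (a⁻¹ * b) = b⁻¹ * y * b := by group
      rw [this]
      exact mem_cj.mp hyb
    have h3 : a⁻¹ * y * a ∈ M ⊓ cj (a⁻¹ * b) M := ⟨h1, h2⟩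
    rw [htriv _ hnm, Subgroup.mem_bot] at h3
    have := congrArg (fun z => a * z * a⁻¹) h3
    simpa [mul_assoc] using this
  set F : G ⧸ M → Finset G :=
    fun q => ((cj (Quotient.out q) M : Set G).toFinset).erase 1 with hF
  have hmemF : ∀ (q : G ⧸ M) (x : G), x ∈ F q ↔ x ≠ 1 ∧ x ∈ cj (Quotient.out q) M := by
    intro q x
    simp [hF, Finset.mem_erase, Set.mem_toFinset]
  refine ⟨(Finset.univ : Finset (G ⧸ M)).biUnion F, ?_, ?_⟩
  · intro x
    constructor
    · intro hx
      obtain ⟨q, _, hq⟩ := Finset.mem_biUnion.mp hx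
      obtain ⟨hx1, hxm⟩ := (hmemF q x).mp hq
      exact ⟨hx1, _, hxm⟩
    · rintro ⟨hx1, g, hg⟩
      apply Finset.mem_biUnion.mpr
      refine ⟨(g : G ⧸ M), Finset.mem_univ _, (hmemF _ x).mpr ⟨hx1, ?_⟩⟩
      have : (((((g : G ⧸ M)).out : G)) : G ⧸ M) = (g : G ⧸ M) := QuotientGroup.out_eq' _
      rw [key _ _ this]
      exact hg
  · have hdisj : ∀ q₁ ∈ (Finset.univ : Finset (G ⧸ M)), ∀ q₂ ∈ Finset.univ,
        q₁ ≠ q₂ → Disjoint (F q₁) (F q₂) := by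
      intro q₁ _ q₂ _ hne
      rw [Finset.disjoint_left]
      intro y h1 h2
      obtain ⟨hy1, hm1⟩ := (hmemF q₁ y).mp h1
      obtain ⟨_, hm2⟩ := (hmemF q₂ y).mp h2
      have houts : ((Quotient.out q₁ : G) : G ⧸ M) ≠ ((Quotient.out q₂ : G) : G ⧸ M) := by
        rw [QuotientGroup.out_eq', QuotientGroup.out_eq']
        exact hne
      exact hy1 (htriv' _ _ houts y hm1 hm2)
    rw [Finset.card_biUnion hdisj]
    have hcardF : ∀ q : G ⧸ M, (F q).card = Nat.card M - 1 := by
      intro q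
      have h1mem : (1 : G) ∈ (cj (Quotient.out q) M : Set G).toFinset := by
        rw [Set.mem_toFinset]
        exact (cj (Quotient.out q) M).one_mem
      rw [hF]
      rw [Finset.card_erase_of_mem h1mem]
      congr 1
      rw [Set.toFinset_card]
      rw [← card_cj (Quotient.out q) M]
      rw [Nat.card_eq_fintype_card]
      congr 1
    rw [Finset.sum_congr rfl (fun q _ => hcardF q)]
    rw [Finset.sum_const, smul_eq_mul, Finset.card_univ]
    have hqcard : Fintype.card (G ⧸ M) = M.index := by
      rw [Subgroup.index_eq_card, Nat.card_eq_fintype_card]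
    rw [hqcard]
    have hMpos : 1 ≤ Nat.card M := Nat.one_le_iff_ne_zero.mpr Nat.card_pos.ne'
    have hmul : M.index * Nat.card M = Nat.card G := M.index_mul_card
    have hsub1 : (Nat.card M - 1) + 1 = Nat.card M := Nat.sub_add_cancel hMpos
    have : M.index * (Nat.card M - 1) + M.index = M.index * Nat.card M := by
      calc M.index * (Nat.card M - 1) + M.index
          = M.index * ((Nat.card M - 1) + 1) := by ring
        _ = M.index * Nat.card M := by rw [hsub1]
    rw [this, hmul]

/-- In a nonabelian finite simple group some two distinct maximal subgroups intersect
nontrivially. -/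
private lemma exists_pair [Finite G] [IsSimpleGroup G] (hna : ¬ ∀ a b : G, a * b = b * a) :
    ∃ M₁ M₂ : Subgroup G, IsCoatom M₁ ∧ IsCoatom M₂ ∧ M₁ ≠ M₂ ∧ M₁ ⊓ M₂ ≠ ⊥ := by
  classical
  letI := Fintype.ofFinite G
  by_contra hcon
  push_neg at hcon
  have hcoatom_triv : ∀ M : Subgroup G, IsCoatom M → ∀ g : G, g ∉ M → M ⊓ cj g M = ⊥ := by
    intro M hM g hg
    refine hcon _ _ hM (coatom_cj hM) ?_
    intro he
    apply hg
    rw [← coatom_self_normalizer hna hM]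
    rw [Subgroup.mem_normalizer_iff'']
    intro h
    rw [← mem_cj (g := g) (x := h), ← he]
  have hzp : ∀ x : G, x ≠ 1 → ∃ M : Subgroup G, IsCoatom M ∧ x ∈ M := by
    intro x hx
    rcases eq_top_or_exists_le_coatom (Subgroup.zpowers x) with h | ⟨M, hM, hle⟩
    · exact absurd h (not_cyclic hna x)
    · exact ⟨M, hM, hle (Subgroup.mem_zpowers x)⟩
  obtain ⟨x₀, hx₀⟩ := exists_ne (1 : G)
  obtain ⟨M, hM, _⟩ := hzp x₀ hx₀
  obtain ⟨D₁, hD₁, hc₁⟩ := card_conj_union M (coatom_ne_bot hna hM) (hcoatom_triv M hM)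
  have hiM : 1 < M.index := Subgroup.one_lt_index_of_ne_top hM.1
  have hx : ∃ x : G, x ∉ insert (1 : G) D₁ := by
    by_contra h
    push_neg at h
    have hsub : (Finset.univ : Finset G) ⊆ insert (1 : G) D₁ := fun y _ => h y
    have := Finset.card_le_card hsub
    rw [Finset.card_univ] at this
    have hins := Finset.card_insert_le (1 : G) D₁
    have hG : Fintype.card G = Nat.card G := (Nat.card_eq_fintype_card).symm
    omega
  obtain ⟨x, hxnot⟩ := hx
  have hx1 : x ≠ 1 := fun h => hxnot (h ▸ Finset.mem_insert_self 1 D₁)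
  have hxD : x ∉ D₁ := fun h => hxnot (Finset.mem_insert_of_mem h)
  have hxconj : ∀ g : G, x ∉ cj g M := by
    intro g hg
    exact hxD ((hD₁ x).mpr ⟨hx1, g, hg⟩)
  obtain ⟨K, hK, hxK⟩ := hzp x hx1
  obtain ⟨D₂, hD₂, hc₂⟩ := card_conj_union K (coatom_ne_bot hna hK) (hcoatom_triv K hK)
  have hiK : 1 < K.index := Subgroup.one_lt_index_of_ne_top hK.1
  have hdisj : Disjoint D₁ D₂ := by
    rw [Finset.disjoint_left]
    intro y h1 h2
    obtain ⟨hy1, a, hya⟩ := (hD₁ y).mp h1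
    obtain ⟨_, b, hyb⟩ := (hD₂ y).mp h2
    have hne : cj a M ≠ cj b K := by
      intro he
      have h' : cj b⁻¹ (cj a M) = cj b⁻¹ (cj b K) := by rw [he]
      rw [cj_cj, cj_cj, inv_mul_cancel, cj_one] at h'
      exact hxconj (b⁻¹ * a) (h' ▸ hxK)
    have hbot := hcon _ _ (coatom_cj hM) (coatom_cj hK) hne
    have : y ∈ cj a M ⊓ cj b K := ⟨hya, hyb⟩
    rw [hbot, Subgroup.mem_bot] at this
    exact hy1 this
  have hsub : D₁ ∪ D₂ ⊆ Finset.univ.erase (1 : G) := by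
    intro y hy
    rcases Finset.mem_union.mp hy with h | h
    · exact Finset.mem_erase.mpr ⟨((hD₁ y).mp h).1, Finset.mem_univ _⟩
    · exact Finset.mem_erase.mpr ⟨((hD₂ y).mp h).1, Finset.mem_univ _⟩
  have hcard : D₁.card + D₂.card ≤ Fintype.card G - 1 := by
    have h1 := Finset.card_le_card hsub
    rw [Finset.card_union_of_disjoint hdisj] at h1
    have h2 : (Finset.univ.erase (1 : G)).card = Fintype.card G - 1 := by
      rw [Finset.card_erase_of_mem (Finset.mem_univ _), Finset.card_univ]
    omega
  -- index bounds
  have hM2 : 2 ≤ Nat.card M := (Subgroup.one_lt_card_iff_ne_bot _).mpr (coatom_ne_bot hna hM)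
  have hK2 : 2 ≤ Nat.card K := (Subgroup.one_lt_card_iff_ne_bot _).mpr (coatom_ne_bot hna hK)
  have hmulM : M.index * Nat.card M = Nat.card G := M.index_mul_card
  have hmulK : K.index * Nat.card K = Nat.card G := K.index_mul_card
  have hM2i : 2 * M.index ≤ Nat.card G := by
    calc 2 * M.index = M.index * 2 := by ring
    _ ≤ M.index * Nat.card M := Nat.mul_le_mul_left _ hM2
    _ = Nat.card G := hmulM
  have hK2i : 2 * K.index ≤ Nat.card G := by
    calc 2 * K.index = K.index * 2 := by ring
    _ ≤ K.index * Nat.card K := Nat.mul_le_mul_left _ hK2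
    _ = Nat.card G := hmulK
  have hG : Fintype.card G = Nat.card G := (Nat.card_eq_fintype_card).symm
  have hGpos : 1 ≤ Nat.card G := Nat.one_le_iff_ne_zero.mpr Nat.card_pos.ne'
  omega

/-- The key exchange argument: if the maximal-cardinality intersection `H ⊓ K` is normal in
`H`, then replacing `(H, K)` by `(K, hKh⁻¹)` gives a pair whose intersection is the same and
is normal in neither. -/
private lemma exchange [Finite G] [IsSimpleGroup G] (hna : ¬ ∀ a b : G, a * b = b * a)
    {H K : Subgroup G} (hH : IsCoatom H) (hK : IsCoatom K) (hne : H ≠ K)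
    (hbot : H ⊓ K ≠ ⊥)
    (hmax : ∀ M₁ M₂ : Subgroup G, IsCoatom M₁ → IsCoatom M₂ → M₁ ≠ M₂ →
      Nat.card (M₁ ⊓ M₂ : Subgroup G) ≤ Nat.card (H ⊓ K : Subgroup G))
    (hnorm : ((H ⊓ K).subgroupOf H).Normal) :
    ∃ K' : Subgroup G, IsCoatom K' ∧ K ≠ K' ∧ K ⊓ K' = H ⊓ K ∧
      ¬ ((H ⊓ K).subgroupOf K).Normal ∧ ¬ ((H ⊓ K).subgroupOf K').Normal := by
  set T := H ⊓ K with hT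
  have hTH : T ≤ H := inf_le_left
  have hTK : T ≤ K := inf_le_right
  -- the normalizer of T is H
  have hNle : H ≤ normalizer (T : Set G) := Subgroup.le_normalizer_of_normal_subgroupOf (hK := hnorm) hTH
  have hNtop : normalizer (T : Set G) ≠ ⊤ := by
    intro h
    rcases (Subgroup.normalizer_eq_top_iff.mp h).eq_bot_or_eq_top with h' | h'
    · exact hbot h'
    · exact hH.1 (top_le_iff.mp (h' ▸ hTH))
  have hNT : normalizer (T : Set G) = H := by
    rcases hNle.lt_or_eq with hlt | heq
    · exact absurd (hH.2 _ hlt) hNtop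
    · exact heq.symm
  -- T is a proper subgroup of H
  have hTneH : T ≠ H := by
    intro h
    have hHK : H ≤ K := h ▸ hTK
    rcases hHK.lt_or_eq with hlt | heq
    · exact hK.1 (hH.2 _ hlt)
    · exact hne heq
  obtain ⟨h, hhH, hhT⟩ := SetLike.exists_of_lt (hTH.lt_of_ne hTneH)
  refine ⟨cj h K, coatom_cj hK, ?_, ?_, ?_, ?_⟩
  · -- K ≠ cj h K
    intro he
    apply hhT
    have hhNK : h ∈ normalizer (K : Set G) := by
      rw [Subgroup.mem_normalizer_iff'']
      intro y
      rw [← mem_cj (g := h) (x := y), ← he]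
    rw [coatom_self_normalizer hna hK] at hhNK
    exact ⟨hhH, hhNK⟩
  · -- K ⊓ cj h K = T
    have hTK' : T ≤ cj h K := by
      have hcjT : cj h T = T := cj_of_mem_normalizer (hNT.symm ▸ hhH)
      calc T = cj h T := hcjT.symm
        _ ≤ cj h K := cj_mono hTK
    have hKK'ne : K ≠ cj h K := by
      intro he
      apply hhT
      have hhNK : h ∈ normalizer (K : Set G) := by
        rw [Subgroup.mem_normalizer_iff'']
        intro y
        rw [← mem_cj (g := h) (x := y), ← he]
      rw [coatom_self_normalizer hna hK] at hhNK
      exact ⟨hhH, hhNK⟩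
    have hle : T ≤ K ⊓ cj h K := le_inf hTK hTK'
    have hcardle : Nat.card (K ⊓ cj h K : Subgroup G) ≤ Nat.card T :=
      hmax K (cj h K) hK (coatom_cj hK) hKK'ne
    exact (eq_of_le_of_card_le' hle hcardle).symm
  · -- T not normal in K
    intro hn
    have hKle : K ≤ normalizer (T : Set G) := Subgroup.le_normalizer_of_normal_subgroupOf (hK := hn) hTK
    rw [hNT] at hKle
    rcases hKle.lt_or_eq with hlt | heq
    · exact hH.1 (hK.2 _ hlt)
    · exact hne heq.symm
  · -- T not normal in cj h K
    intro hn
    have hTK' : T ≤ cj h K := by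
      have hcjT : cj h T = T := cj_of_mem_normalizer (hNT.symm ▸ hhH)
      calc T = cj h T := hcjT.symm
        _ ≤ cj h K := cj_mono hTK
    have hKle : cj h K ≤ normalizer (T : Set G) := Subgroup.le_normalizer_of_normal_subgroupOf (hK := hn) hTK'
    rw [hNT] at hKle
    have hKH : cj h K = H := by
      rcases hKle.lt_or_eq with hlt | heq
      · exact absurd ((coatom_cj hK).2 H hlt) hH.1
      · exact heq
    -- then K = H, contradiction
    apply hne
    have : cj h H = H := cj_of_mem_normalizer (Subgroup.le_normalizer hhH)
    have hKeq : cj h K = cj h H := by rw [hKH, this]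
    have h' : cj h⁻¹ (cj h K) = cj h⁻¹ (cj h H) := by rw [hKeq]
    rw [cj_cj, cj_cj, inv_mul_cancel, cj_one, cj_one] at h'
    exact h'.symm

theorem exists_maximal_pair_with_nonnormal_intersection (G : Type) [Group G] [Finite G]
    [IsSimpleGroup G] (hna : ¬ ∀ a b : G, a * b = b * a) :
    ∃ H K : Subgroup G, IsCoatom H ∧ IsCoatom K ∧ H ≠ K ∧
      H ⊓ K ≠ ⊥ ∧
      ¬ ((H ⊓ K).subgroupOf H).Normal ∧
      ¬ ((H ⊓ K).subgroupOf K).Normal ∧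
      IsGreatest
        {n : ℕ | ∃ M₁ M₂ : Subgroup G, IsCoatom M₁ ∧ IsCoatom M₂ ∧ M₁ ≠ M₂ ∧
          n = Nat.card (M₁ ⊓ M₂ : Subgroup G)}
        (Nat.card (H ⊓ K : Subgroup G)) := by
  classical
  set S : Set ℕ := {n : ℕ | ∃ M₁ M₂ : Subgroup G, IsCoatom M₁ ∧ IsCoatom M₂ ∧ M₁ ≠ M₂ ∧
      n = Nat.card (M₁ ⊓ M₂ : Subgroup G)} with hS
  obtain ⟨A, B, hA, hB, hAB, hABbot⟩ := exists_pair hna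
  have hSne : S.Nonempty := ⟨Nat.card (A ⊓ B : Subgroup G), A, B, hA, hB, hAB, rfl⟩
  have hSbdd : BddAbove S := by
    refine ⟨Nat.card G, ?_⟩
    rintro n ⟨M₁, M₂, _, _, _, rfl⟩
    exact Subgroup.card_le_card_group _
  obtain ⟨H, K, hH, hK, hHK, hcard⟩ := Nat.sSup_mem hSne hSbdd
  have hub : ∀ m ∈ S, m ≤ Nat.card (H ⊓ K : Subgroup G) := by
    intro m hm
    rw [← hcard]
    exact le_csSup hSbdd hm
  have hmax : ∀ M₁ M₂ : Subgroup G, IsCoatom M₁ → IsCoatom M₂ → M₁ ≠ M₂ →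
      Nat.card (M₁ ⊓ M₂ : Subgroup G) ≤ Nat.card (H ⊓ K : Subgroup G) := by
    intro M₁ M₂ h1 h2 h3
    exact hub _ ⟨M₁, M₂, h1, h2, h3, rfl⟩
  have hbot : H ⊓ K ≠ ⊥ := by
    have h2 : 2 ≤ Nat.card (A ⊓ B : Subgroup G) :=
      (Subgroup.one_lt_card_iff_ne_bot _).mpr hABbot
    have h3 := hub _ ⟨A, B, hA, hB, hAB, rfl⟩
    rw [← Subgroup.one_lt_card_iff_ne_bot (H ⊓ K)]
    omega
  have hgreat : IsGreatest S (Nat.card (H ⊓ K : Subgroup G)) :=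
    ⟨⟨H, K, hH, hK, hHK, rfl⟩, hub⟩
  by_cases hnH : ((H ⊓ K).subgroupOf H).Normal
  · obtain ⟨K', hK', hKK', hinf, hn1, hn2⟩ := exchange hna hH hK hHK hbot hmax hnH
    refine ⟨K, K', hK, hK', hKK', ?_, ?_, ?_, ?_⟩
    · rw [hinf]; exact hbot
    · rw [hinf]; exact hn1
    · rw [hinf]; exact hn2
    · rw [hinf]; exact hgreat
  · by_cases hnK : ((H ⊓ K).subgroupOf K).Normal
    · -- symmetric case : swap H and K
      have hbot' : K ⊓ H ≠ ⊥ := by rwa [inf_comm]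
      have hmax' : ∀ M₁ M₂ : Subgroup G, IsCoatom M₁ → IsCoatom M₂ → M₁ ≠ M₂ →
          Nat.card (M₁ ⊓ M₂ : Subgroup G) ≤ Nat.card (K ⊓ H : Subgroup G) := by
        intro M₁ M₂ h1 h2 h3
        rw [inf_comm (a := K) (b := H)]
        exact hmax M₁ M₂ h1 h2 h3
      have hnK' : ((K ⊓ H).subgroupOf K).Normal := by rwa [inf_comm] at hnK
      obtain ⟨K', hK', hKK', hinf, hn1, hn2⟩ :=
        exchange hna hK hH hHK.symm hbot' hmax' hnK'
      have hinf' : H ⊓ K' = H ⊓ K := by rwa [inf_comm (a := K) (b := H)] at hinf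
      have hn1' : ¬ ((H ⊓ K).subgroupOf H).Normal := by
        rwa [inf_comm (a := K) (b := H)] at hn1
      have hn2' : ¬ ((H ⊓ K).subgroupOf K').Normal := by
        rwa [inf_comm (a := K) (b := H)] at hn2
      refine ⟨H, K', hH, hK', hKK', ?_, ?_, ?_, ?_⟩
      · rw [hinf']; exact hbot
      · rw [hinf']; exact hn1'
      · rw [hinf']; exact hn2'
      · rw [hinf']; exact hgreat
    · exact ⟨H, K, hH, hK, hHK, hbot, hnH, hnK, hgreat⟩
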